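/- Let g be a complex semisimple Lie algebra with compact real form u and conjugation τ, and Ω_τ as above. The moment map for the adjoint action of the compact group U on (g, Ω_τ), identified with a map μ: g → u via the Killing form of u, is given by μ(x) = [τ(ix), x] = −i[τx, x]; in particular [τx, x] ∈ i·u and −i[τx, x] ∈ u for every x ∈ g. -/

import Mathlib

/-- `Ω_τ(X,Y) = B_τ(iX, Y) = 2·Im(−⟨X, τY⟩)`: the symplectic form obtained from the real
inner product `B_τ(X,Y) = −⟨X,τY⟩_ℝ` (the real Killing form version, `= 2 Re H_τ`),
where `⟨·,·⟩` is the complex Killing form and `τ` the conjugation of the compact real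
form. -/
noncomputable def OmegaTau2 {L : Type*} [LieRing L] [LieAlgebra ℂ L] [Module.Finite ℂ L]
    (τ : L →ₗ[ℝ] L) (X Y : L) : ℝ :=
  2 * (-(killingForm ℂ L X (τ Y))).im

lemma re_symm {L : Type*} [LieRing L] [LieAlgebra ℂ L] [FiniteDimensional ℂ L]
    (τ : L →ₗ[ℝ] L)
    (hconj : ∀ (c : ℂ) (X : L), τ (c • X) = (starRingEnd ℂ) c • τ X)
    (him : ∀ X : L, (killingForm ℂ L X (τ X)).im = 0)
    (X Y : L) : (killingForm ℂ L X (τ Y)).re = (killingForm ℂ L Y (τ X)).re := by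
  have key : killingForm ℂ L (X + Complex.I • Y) (τ (X + Complex.I • Y))
      = killingForm ℂ L X (τ X) + killingForm ℂ L Y (τ Y)
        - Complex.I * killingForm ℂ L X (τ Y) + Complex.I * killingForm ℂ L Y (τ X) := by
    simp only [map_add, hconj, Complex.conj_I, LinearMap.add_apply, map_smul,
      LinearMap.smul_apply, map_neg, LinearMap.neg_apply, smul_neg, neg_smul,
      smul_eq_mul]
    linear_combination (-(((killingForm ℂ L) Y) (τ Y))) * Complex.I_sq
  have h := him (X + Complex.I • Y)
  rw [key] at h
  simp only [Complex.sub_im, Complex.add_im, him X, him Y, Complex.mul_im,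
    Complex.I_re, Complex.I_im] at h
  linarith

/-- Let `g` be a complex semisimple Lie algebra with compact real form `u` and
conjugation `τ`.  The moment map for the adjoint action of the compact group `U` on
`(g, Ω_τ)`, identified with a map `μ : g → u` via the Killing form of `u` (which is the
restriction to `u` of the complex Killing form), is `μ(x) = [τ(ix), x] = −i[τx, x]`:
for every `x`, `[τx,x] ∈ i·u` and `−i[τx,x] ∈ u`, and
`⟨μ(x), A⟩_u = (1/2)·Ω_τ(ad(A)x, x)` for all `A ∈ u`. -/
theorem stmt18 {L : Type*} [LieRing L] [LieAlgebra ℂ L] [FiniteDimensional ℂ L]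
    [LieAlgebra.IsSemisimple ℂ L]
    (τ : L →ₗ[ℝ] L)
    (hbr : ∀ X Y : L, τ ⁅X, Y⁆ = ⁅τ X, τ Y⁆)
    (hconj : ∀ (c : ℂ) (X : L), τ (c • X) = (starRingEnd ℂ) c • τ X)
    (hinv : ∀ X : L, τ (τ X) = X)
    (hpos : ∀ X : L, X ≠ 0 →
      0 < (-(killingForm ℂ L X (τ X))).re ∧ (-(killingForm ℂ L X (τ X))).im = 0) :
    (∀ x : L, ⁅τ (Complex.I • x), x⁆ = (-Complex.I) • ⁅τ x, x⁆) ∧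
    (∀ x : L, τ ⁅τ x, x⁆ = -⁅τ x, x⁆) ∧
    (∀ x : L, τ ((-Complex.I) • ⁅τ x, x⁆) = (-Complex.I) • ⁅τ x, x⁆) ∧
    (∀ (x A : L), τ A = A →
      killingForm ℂ L ((-Complex.I) • ⁅τ x, x⁆) A
        = (((1 / 2) * OmegaTau2 τ ⁅A, x⁆ x : ℝ) : ℂ)) := by
  have h2 : ∀ x : L, τ ⁅τ x, x⁆ = -⁅τ x, x⁆ := by
    intro x
    rw [hbr, hinv, ← lie_skew]
  have him : ∀ X : L, (killingForm ℂ L X (τ X)).im = 0 := by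
    intro X
    by_cases hX : X = 0
    · simp [hX]
    · have := (hpos X hX).2
      simpa using this
  refine ⟨?_, h2, ?_, ?_⟩
  · intro x
    rw [hconj, Complex.conj_I, smul_lie]
  · intro x
    rw [hconj, h2]
    simp only [map_neg, Complex.conj_I, neg_neg]
    rw [smul_neg, neg_smul]
  · intro x A hA
    set c := killingForm ℂ L ⁅A, x⁆ (τ x) with hc
    have hinvar : killingForm ℂ L ⁅τ x, x⁆ A = -c := by
      rw [LieModule.traceForm_apply_lie_apply, ← lie_skew x A, map_neg,
        LieModule.traceForm_comm, ← hc]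
    have hre : c.re = 0 := by
      have h1 := re_symm τ hconj him ⁅A, x⁆ x
      have h2' : killingForm ℂ L x (τ ⁅A, x⁆) = -c := by
        rw [hbr, hA, ← LieModule.traceForm_apply_lie_apply, ← lie_skew x A, map_neg,
          LinearMap.neg_apply, ← hc]
      rw [h2'] at h1
      simp only [Complex.neg_re] at h1
      linarith
    have hLHS : killingForm ℂ L ((-Complex.I) • ⁅τ x, x⁆) A = Complex.I * c := by
      rw [map_smul, LinearMap.smul_apply, hinvar, smul_eq_mul]
      ring
    rw [hLHS]
    unfold OmegaTau2
    apply Complex.ext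
    · simp [Complex.mul_re, hre]
      rw [hc]
    · simp [Complex.mul_im, hre]
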